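/- Let (φ, ψ) solve the exciton-polariton system for t ≥ t₁ and (φ̃, ψ̃) solve the linear exciton system B (iφ̃_t = −Δφ̃ + γψ̃, iψ̃_t = ω₀ψ̃ + γφ̃) with initial data at t₁ differing from (φ, ψ) by (φ̂₀, ψ̂₀). Then for t₁ ≤ t with ½γ²(t − t₁)² < 1, sup_{t₁≤τ≤t} ‖ψ̂(τ)‖_{H^s} ≤ (1 − ½γ²(t−t₁)²)^{−1}(‖ψ̂₀‖ + γ(t−t₁)‖φ̂₀‖ + |g|K_p(t−t₁) sup_{t₁≤τ≤t}‖ψ(τ)‖_{H^s}^p), where ψ̂ = ψ̃ − ψ. -/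

import Mathlib

open Set MeasureTheory

lemma norm_integral_le_cubic {E : Type*} [NormedAddCommGroup E] [NormedSpace ℝ E]
    {f : ℝ → E} {t₁ σ A B C D : ℝ} (h : t₁ ≤ σ)
    (hf : IntervalIntegrable f volume t₁ σ)
    (hle : ∀ x ∈ Icc t₁ σ, ‖f x‖ ≤ A + B*(x - t₁) + C*(x - t₁)^2 + D*(x - t₁)^3) :
    ‖∫ x in t₁..σ, f x‖
      ≤ A*(σ - t₁) + B*(σ - t₁)^2/2 + C*(σ - t₁)^3/3 + D*(σ - t₁)^4/4 := by
  have hg : Continuous fun x : ℝ => A + B*(x - t₁) + C*(x - t₁)^2 + D*(x - t₁)^3 := by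
    fun_prop
  have hgi : IntervalIntegrable
      (fun x : ℝ => A + B*(x - t₁) + C*(x - t₁)^2 + D*(x - t₁)^3) volume t₁ σ :=
    hg.intervalIntegrable _ _
  have h1 : ‖∫ x in t₁..σ, f x‖ ≤ ∫ x in t₁..σ, ‖f x‖ :=
    intervalIntegral.norm_integral_le_integral_norm h
  have h2 : (∫ x in t₁..σ, ‖f x‖)
      ≤ ∫ x in t₁..σ, (A + B*(x - t₁) + C*(x - t₁)^2 + D*(x - t₁)^3) :=
    intervalIntegral.integral_mono_on h hf.norm hgi hle
  have h3 : (∫ x in t₁..σ, (A + B*(x - t₁) + C*(x - t₁)^2 + D*(x - t₁)^3))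
      = A*(σ - t₁) + B*(σ - t₁)^2/2 + C*(σ - t₁)^3/3 + D*(σ - t₁)^4/4 := by
    have hder : ∀ x ∈ uIcc t₁ σ, HasDerivAt
        (fun τ => A*(τ - t₁) + B*(τ - t₁)^2/2 + C*(τ - t₁)^3/3 + D*(τ - t₁)^4/4)
        (A + B*(x - t₁) + C*(x - t₁)^2 + D*(x - t₁)^3) x := by
      intro x _
      have u : HasDerivAt (fun τ : ℝ => τ - t₁) 1 x := (hasDerivAt_id x).sub_const t₁
      have big := (((u.const_mul A).add (((u.pow 2).const_mul B).div_const 2)).add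
        (((u.pow 3).const_mul C).div_const 3)).add (((u.pow 4).const_mul D).div_const 4)
      refine big.congr_deriv ?_
      push_cast
      ring_nf
    rw [intervalIntegral.integral_eq_sub_of_hasDerivAt hder hgi]
    ring
  linarith

lemma final_arith (x a q r M : ℝ) (ha : 0 ≤ a) (hq : 0 ≤ q) (hr : 0 ≤ r)
    (hx0 : 0 ≤ x) (hx2 : x^2 < 2)
    (h : (1 - x^4/24) * M ≤ a*(1 + x^2/2) + q*(1 + x^2/6) + x*r*(1 + x^2/12)) :
    (1 - x^2/2) * M ≤ a + q + r := by
  have h24 : (0:ℝ) < 1 - x^4/24 := by nlinarith [sq_nonneg x, sq_nonneg (x^2)]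
  have hA : (1 + x^2/2)*(1 - x^2/2) ≤ 1 - x^4/24 := by nlinarith [sq_nonneg (x^2)]
  have hB : (1 + x^2/6)*(1 - x^2/2) ≤ 1 - x^4/24 := by
    nlinarith [sq_nonneg x, sq_nonneg (x^2)]
  have hC : x*(1 + x^2/12)*(1 - x^2/2) ≤ 1 - x^4/24 := by
    nlinarith [sq_nonneg (x-1), mul_nonneg hx0 (sq_nonneg (x-1)), sq_nonneg x,
      mul_nonneg (mul_nonneg hx0 hx0) hx0, sq_nonneg (x^2-1),
      mul_nonneg hx0 (sq_nonneg (x^2-1))]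
  have h1c : (0:ℝ) ≤ 1 - x^2/2 := by linarith
  have s1 := mul_le_mul_of_nonneg_left h h1c
  have f1 := mul_le_mul_of_nonneg_left hA ha
  have f2 := mul_le_mul_of_nonneg_left hB hq
  have f3 := mul_le_mul_of_nonneg_left hC hr
  have s2 : (1 - x^4/24) * ((1 - x^2/2) * M) ≤ (1 - x^4/24) * (a + q + r) := by
    nlinarith [s1, f1, f2, f3]
  exact le_of_mul_le_mul_left s2 h24

set_option maxHeartbeats 1000000 in
/-- Approximation B error bound: the differences `φ̂ = φ̃ − φ`, `ψ̂ = ψ̃ − ψ` between the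
exciton-polariton solution and the solution of the linear exciton system B with data
`(φ̂₀, ψ̂₀)` at `t₁` satisfy, whenever `½γ²(t−t₁)² < 1`,
`sup_{t₁≤τ≤t}‖ψ̂(τ)‖ ≤ (1 − ½γ²(t−t₁)²)⁻¹(‖ψ̂₀‖ + γ(t−t₁)‖φ̂₀‖ + |g|K_p(t−t₁) sup_{t₁≤τ≤t}‖ψ(τ)‖^p)`.
Abstract setting: `E = H^s(ℝⁿ)`, `s > n/2`; `U t = e^{itΔ}` isometric;
`N u = |u|^{p−1}u` with `‖N u‖ ≤ K_p‖u‖^p`; `φ̂, ψ̂` are given by their Duhamel formulas. -/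
theorem stmt14 {E : Type*} [NormedAddCommGroup E] [NormedSpace ℂ E] [CompleteSpace E]
    (p γ g ω₀ Kp t₁ T : ℝ) (hp : 1 < p) (hγ : 0 < γ) (hKp : 0 ≤ Kp)
    (ht₁ : 0 ≤ t₁) (ht₁T : t₁ < T)
    (U : ℝ → E →ₗᵢ[ℂ] E) (N : E → E) (hN : ∀ u : E, ‖N u‖ ≤ Kp * ‖u‖ ^ p)
    (φhat₀ ψhat₀ : E)
    (ψ φhat ψhat : ℝ → E)
    (hψc : ContinuousOn ψ (Icc t₁ T))
    (hφhc : ContinuousOn φhat (Icc t₁ T)) (hψhc : ContinuousOn ψhat (Icc t₁ T))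
    (hIntU : ∀ t ∈ Icc t₁ T, IntervalIntegrable (fun τ => U (t - τ) (ψhat τ)) volume t₁ t)
    (hDuhφh : ∀ t ∈ Icc t₁ T,
      φhat t = U (t - t₁) φhat₀
        - (Complex.I * (γ : ℂ)) • ∫ τ in t₁..t, U (t - τ) (ψhat τ))
    (hDuhψh : ∀ t ∈ Icc t₁ T,
      ψhat t = Complex.exp (-(Complex.I) * (ω₀ : ℂ) * ((t - t₁ : ℝ) : ℂ)) • ψhat₀
        - (Complex.I * (γ : ℂ)) • ∫ τ in t₁..t,
            Complex.exp (-(Complex.I) * (ω₀ : ℂ) * ((t - τ : ℝ) : ℂ)) • φhat τ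
        + (Complex.I * (g : ℂ)) • ∫ τ in t₁..t,
            Complex.exp (-(Complex.I) * (ω₀ : ℂ) * ((t - τ : ℝ) : ℂ)) • N (ψ τ)) :
    ∀ t ∈ Icc t₁ T, γ ^ 2 * (t - t₁) ^ 2 / 2 < 1 →
      sSup ((fun τ => ‖ψhat τ‖) '' Icc t₁ t)
        ≤ (1 - γ ^ 2 * (t - t₁) ^ 2 / 2)⁻¹ *
            (‖ψhat₀‖ + γ * (t - t₁) * ‖φhat₀‖
              + |g| * Kp * (t - t₁) * (sSup ((fun τ => ‖ψ τ‖) '' Icc t₁ t)) ^ p) := by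
  intro t ht hc
  obtain ⟨ht₁t, htT⟩ := ht
  have hsub : Icc t₁ t ⊆ Icc t₁ T := Icc_subset_Icc le_rfl htT
  set M := sSup ((fun τ => ‖ψhat τ‖) '' Icc t₁ t) with hMdef
  set S := sSup ((fun τ => ‖ψ τ‖) '' Icc t₁ t) with hSdef
  have hne : (Icc t₁ t).Nonempty := nonempty_Icc.2 ht₁t
  have hbddψh : BddAbove ((fun τ => ‖ψhat τ‖) '' Icc t₁ t) :=
    isCompact_Icc.bddAbove_image (hψhc.mono hsub).norm
  have hbddψ : BddAbove ((fun τ => ‖ψ τ‖) '' Icc t₁ t) :=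
    isCompact_Icc.bddAbove_image (hψc.mono hsub).norm
  have hMle : ∀ σ ∈ Icc t₁ t, ‖ψhat σ‖ ≤ M := fun σ hσ => le_csSup hbddψh ⟨σ, hσ, rfl⟩
  have hSle : ∀ σ ∈ Icc t₁ t, ‖ψ σ‖ ≤ S := fun σ hσ => le_csSup hbddψ ⟨σ, hσ, rfl⟩
  have ht₁mem : t₁ ∈ Icc t₁ t := left_mem_Icc.2 ht₁t
  have hM0 : 0 ≤ M := (norm_nonneg _).trans (hMle t₁ ht₁mem)
  have hS0 : 0 ≤ S := (norm_nonneg _).trans (hSle t₁ ht₁mem)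
  have hSp : 0 ≤ S ^ p := Real.rpow_nonneg hS0 p
  set a := ‖ψhat₀‖ with hadef
  set b := ‖φhat₀‖ with hbdef
  set d := |g| * Kp * S ^ p with hddef
  have ha0 : 0 ≤ a := norm_nonneg _
  have hb0 : 0 ≤ b := norm_nonneg _
  have hd0 : 0 ≤ d := mul_nonneg (mul_nonneg (abs_nonneg g) hKp) hSp
  have hnormIγ : ‖Complex.I * (γ : ℂ)‖ = γ := by
    simp [abs_of_pos hγ]
  have hnormIg : ‖Complex.I * (g : ℂ)‖ = |g| := by
    simp
  have hexp : ∀ r : ℝ, ‖Complex.exp (-(Complex.I) * (ω₀ : ℂ) * (r : ℂ))‖ = 1 := by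
    intro r
    rw [Complex.norm_exp]
    simp
  -- step 1: first bound on φhat
  have hφb : ∀ τ ∈ Icc t₁ t, ‖φhat τ‖
      ≤ b + (γ*M)*(τ - t₁) + 0*(τ - t₁)^2 + 0*(τ - t₁)^3 := by
    intro τ hτ
    rw [hDuhφh τ (hsub hτ)]
    have h1 : ‖∫ σ in t₁..τ, U (τ - σ) (ψhat σ)‖
        ≤ M*(τ - t₁) + 0*(τ - t₁)^2/2 + 0*(τ - t₁)^3/3 + 0*(τ - t₁)^4/4 := by
      apply norm_integral_le_cubic hτ.1 (hIntU τ (hsub hτ))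
      intro x hx
      rw [(U _).norm_map]
      have h := hMle x ⟨hx.1, hx.2.trans hτ.2⟩
      linarith [h]
    calc ‖U (τ - t₁) φhat₀ - (Complex.I * (γ:ℂ)) • ∫ σ in t₁..τ, U (τ - σ) (ψhat σ)‖
        ≤ ‖U (τ - t₁) φhat₀‖ + ‖(Complex.I * (γ:ℂ)) • ∫ σ in t₁..τ, U (τ - σ) (ψhat σ)‖ :=
          norm_sub_le _ _
      _ = b + γ * ‖∫ σ in t₁..τ, U (τ - σ) (ψhat σ)‖ := by
          rw [(U _).norm_map, norm_smul, hnormIγ]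
      _ ≤ b + γ * (M*(τ - t₁) + 0*(τ - t₁)^2/2 + 0*(τ - t₁)^3/3 + 0*(τ - t₁)^4/4) :=
          add_le_add_right (mul_le_mul_of_nonneg_left h1 hγ.le) b
      _ = b + (γ*M)*(τ - t₁) + 0*(τ - t₁)^2 + 0*(τ - t₁)^3 := by ring
  -- step 2: first bound on ψhat
  have hψb1 : ∀ σ ∈ Icc t₁ t, ‖ψhat σ‖
      ≤ a + (γ*b)*(σ - t₁) + (γ^2*M/2 + γ*d)*(σ - t₁)^2 + 0*(σ - t₁)^3 := by
    intro σ hσ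
    obtain ⟨h1σ, hσt⟩ := hσ
    have hσT : σ ∈ Icc t₁ T := hsub ⟨h1σ, hσt⟩
    have hD := hDuhψh σ hσT
    set J : E := ∫ τ in t₁..σ,
      Complex.exp (-(Complex.I) * (ω₀:ℂ) * ((σ - τ : ℝ) : ℂ)) • N (ψ τ) with hJdef
    have hJb : ‖J‖ ≤ Kp * S ^ p * (σ - t₁) := by
      rw [hJdef]
      have h := intervalIntegral.norm_integral_le_of_norm_le_const (C := Kp * S ^ p)
        (f := fun τ => Complex.exp (-(Complex.I) * (ω₀:ℂ) * ((σ - τ : ℝ) : ℂ)) • N (ψ τ))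
        (a := t₁) (b := σ) ?_
      · rwa [abs_of_nonneg (by linarith : (0:ℝ) ≤ σ - t₁)] at h
      · intro x hx
        rw [uIoc_of_le h1σ] at hx
        rw [norm_smul, hexp, one_mul]
        calc ‖N (ψ x)‖ ≤ Kp * ‖ψ x‖ ^ p := hN _
          _ ≤ Kp * S ^ p := by
              apply mul_le_mul_of_nonneg_left _ hKp
              exact Real.rpow_le_rpow (norm_nonneg _)
                (hSle x ⟨hx.1.le, hx.2.trans hσt⟩) (by linarith)
    have hfint : IntervalIntegrable
        (fun τ => Complex.exp (-(Complex.I) * (ω₀:ℂ) * ((σ - τ : ℝ) : ℂ)) • φhat τ)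
        volume t₁ σ := by
      apply ContinuousOn.intervalIntegrable
      apply ContinuousOn.smul
      · apply Continuous.continuousOn
        exact Complex.continuous_exp.comp
          (continuous_const.mul (Complex.continuous_ofReal.comp
            (continuous_const.sub continuous_id)))
      · apply hφhc.mono
        rw [uIcc_of_le h1σ]
        exact Icc_subset_Icc le_rfl (hσt.trans htT)
    rw [intervalIntegral.integral_add hfint intervalIntegrable_const,
      intervalIntegral.integral_const] at hD
    rw [hD]
    have hI1 : ‖∫ τ in t₁..σ, Complex.exp (-(Complex.I) * (ω₀:ℂ) * ((σ - τ : ℝ) : ℂ)) • φhat τ‖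
        ≤ b*(σ - t₁) + (γ*M)*(σ - t₁)^2/2 + 0*(σ - t₁)^3/3 + 0*(σ - t₁)^4/4 := by
      apply norm_integral_le_cubic h1σ hfint
      intro x hx
      rw [norm_smul, hexp, one_mul]
      exact hφb x ⟨hx.1, hx.2.trans hσt⟩
    have e1 : ‖Complex.exp (-(Complex.I) * (ω₀:ℂ) * ((σ - t₁ : ℝ) : ℂ)) • ψhat₀‖ = a := by
      rw [norm_smul, hexp, one_mul]
    have e2 : ‖(σ - t₁) • ((Complex.I * (g:ℂ)) • J)‖ = (σ - t₁) * (|g| * ‖J‖) := by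
      rw [norm_smul, norm_smul, hnormIg, Real.norm_eq_abs,
        abs_of_nonneg (by linarith : (0:ℝ) ≤ σ - t₁)]
    have hJ2 : (σ - t₁) * (|g| * ‖J‖) ≤ d * (σ - t₁)^2 := by
      have h1 : |g| * ‖J‖ ≤ |g| * (Kp * S ^ p * (σ - t₁)) :=
        mul_le_mul_of_nonneg_left hJb (abs_nonneg g)
      calc (σ - t₁) * (|g| * ‖J‖)
          ≤ (σ - t₁) * (|g| * (Kp * S ^ p * (σ - t₁))) :=
            mul_le_mul_of_nonneg_left h1 (by linarith)
        _ = d * (σ - t₁)^2 := by rw [hddef]; ring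
    calc ‖Complex.exp (-(Complex.I) * (ω₀:ℂ) * ((σ - t₁ : ℝ) : ℂ)) • ψhat₀
          - (Complex.I * (γ:ℂ)) •
            ((∫ τ in t₁..σ, Complex.exp (-(Complex.I) * (ω₀:ℂ) * ((σ - τ : ℝ) : ℂ)) • φhat τ)
              + (σ - t₁) • ((Complex.I * (g:ℂ)) • J))‖
        ≤ a + γ * (‖(∫ τ in t₁..σ,
              Complex.exp (-(Complex.I) * (ω₀:ℂ) * ((σ - τ : ℝ) : ℂ)) • φhat τ)‖
            + ‖(σ - t₁) • ((Complex.I * (g:ℂ)) • J)‖) := by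
          refine (norm_sub_le _ _).trans ?_
          rw [e1, norm_smul, hnormIγ]
          exact add_le_add_right (mul_le_mul_of_nonneg_left (norm_add_le _ _) hγ.le) a
      _ ≤ a + γ * ((b*(σ - t₁) + (γ*M)*(σ - t₁)^2/2 + 0*(σ - t₁)^3/3 + 0*(σ - t₁)^4/4)
            + d*(σ - t₁)^2) := by
          rw [e2]
          exact add_le_add_right (mul_le_mul_of_nonneg_left (add_le_add hI1 hJ2) hγ.le) a
      _ = a + (γ*b)*(σ - t₁) + (γ^2*M/2 + γ*d)*(σ - t₁)^2 + 0*(σ - t₁)^3 := by ring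
  -- step 3: second bound on φhat
  have hφb2 : ∀ τ ∈ Icc t₁ t, ‖φhat τ‖
      ≤ b + (γ*a)*(τ - t₁) + (γ^2*b/2)*(τ - t₁)^2
        + (γ*(γ^2*M/2 + γ*d)/3)*(τ - t₁)^3 := by
    intro τ hτ
    rw [hDuhφh τ (hsub hτ)]
    have h1 : ‖∫ σ in t₁..τ, U (τ - σ) (ψhat σ)‖
        ≤ a*(τ - t₁) + (γ*b)*(τ - t₁)^2/2 + (γ^2*M/2 + γ*d)*(τ - t₁)^3/3
          + 0*(τ - t₁)^4/4 := by
      apply norm_integral_le_cubic hτ.1 (hIntU τ (hsub hτ))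
      intro x hx
      rw [(U _).norm_map]
      exact hψb1 x ⟨hx.1, hx.2.trans hτ.2⟩
    calc ‖U (τ - t₁) φhat₀ - (Complex.I * (γ:ℂ)) • ∫ σ in t₁..τ, U (τ - σ) (ψhat σ)‖
        ≤ ‖U (τ - t₁) φhat₀‖ + ‖(Complex.I * (γ:ℂ)) • ∫ σ in t₁..τ, U (τ - σ) (ψhat σ)‖ :=
          norm_sub_le _ _
      _ = b + γ * ‖∫ σ in t₁..τ, U (τ - σ) (ψhat σ)‖ := by
          rw [(U _).norm_map, norm_smul, hnormIγ]
      _ ≤ b + γ * (a*(τ - t₁) + (γ*b)*(τ - t₁)^2/2 + (γ^2*M/2 + γ*d)*(τ - t₁)^3/3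
            + 0*(τ - t₁)^4/4) :=
          add_le_add_right (mul_le_mul_of_nonneg_left h1 hγ.le) b
      _ = b + (γ*a)*(τ - t₁) + (γ^2*b/2)*(τ - t₁)^2
            + (γ*(γ^2*M/2 + γ*d)/3)*(τ - t₁)^3 := by ring
  -- step 4: second bound on ψhat
  have hψb2 : ∀ σ ∈ Icc t₁ t, ‖ψhat σ‖
      ≤ a + (γ*b)*(σ - t₁) + (γ^2*a/2 + γ*d)*(σ - t₁)^2
        + (γ^3*b/6)*(σ - t₁)^3 + (γ^4*M/24 + γ^3*d/12)*(σ - t₁)^4 := by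
    intro σ hσ
    obtain ⟨h1σ, hσt⟩ := hσ
    have hσT : σ ∈ Icc t₁ T := hsub ⟨h1σ, hσt⟩
    have hD := hDuhψh σ hσT
    set J : E := ∫ τ in t₁..σ,
      Complex.exp (-(Complex.I) * (ω₀:ℂ) * ((σ - τ : ℝ) : ℂ)) • N (ψ τ) with hJdef
    have hJb : ‖J‖ ≤ Kp * S ^ p * (σ - t₁) := by
      rw [hJdef]
      have h := intervalIntegral.norm_integral_le_of_norm_le_const (C := Kp * S ^ p)
        (f := fun τ => Complex.exp (-(Complex.I) * (ω₀:ℂ) * ((σ - τ : ℝ) : ℂ)) • N (ψ τ))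
        (a := t₁) (b := σ) ?_
      · rwa [abs_of_nonneg (by linarith : (0:ℝ) ≤ σ - t₁)] at h
      · intro x hx
        rw [uIoc_of_le h1σ] at hx
        rw [norm_smul, hexp, one_mul]
        calc ‖N (ψ x)‖ ≤ Kp * ‖ψ x‖ ^ p := hN _
          _ ≤ Kp * S ^ p := by
              apply mul_le_mul_of_nonneg_left _ hKp
              exact Real.rpow_le_rpow (norm_nonneg _)
                (hSle x ⟨hx.1.le, hx.2.trans hσt⟩) (by linarith)
    have hfint : IntervalIntegrable
        (fun τ => Complex.exp (-(Complex.I) * (ω₀:ℂ) * ((σ - τ : ℝ) : ℂ)) • φhat τ)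
        volume t₁ σ := by
      apply ContinuousOn.intervalIntegrable
      apply ContinuousOn.smul
      · apply Continuous.continuousOn
        exact Complex.continuous_exp.comp
          (continuous_const.mul (Complex.continuous_ofReal.comp
            (continuous_const.sub continuous_id)))
      · apply hφhc.mono
        rw [uIcc_of_le h1σ]
        exact Icc_subset_Icc le_rfl (hσt.trans htT)
    rw [intervalIntegral.integral_add hfint intervalIntegrable_const,
      intervalIntegral.integral_const] at hD
    rw [hD]
    have hI1 : ‖∫ τ in t₁..σ, Complex.exp (-(Complex.I) * (ω₀:ℂ) * ((σ - τ : ℝ) : ℂ)) • φhat τ‖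
        ≤ b*(σ - t₁) + (γ*a)*(σ - t₁)^2/2 + (γ^2*b/2)*(σ - t₁)^3/3
          + (γ*(γ^2*M/2 + γ*d)/3)*(σ - t₁)^4/4 := by
      apply norm_integral_le_cubic h1σ hfint
      intro x hx
      rw [norm_smul, hexp, one_mul]
      exact hφb2 x ⟨hx.1, hx.2.trans hσt⟩
    have e1 : ‖Complex.exp (-(Complex.I) * (ω₀:ℂ) * ((σ - t₁ : ℝ) : ℂ)) • ψhat₀‖ = a := by
      rw [norm_smul, hexp, one_mul]
    have e2 : ‖(σ - t₁) • ((Complex.I * (g:ℂ)) • J)‖ = (σ - t₁) * (|g| * ‖J‖) := by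
      rw [norm_smul, norm_smul, hnormIg, Real.norm_eq_abs,
        abs_of_nonneg (by linarith : (0:ℝ) ≤ σ - t₁)]
    have hJ2 : (σ - t₁) * (|g| * ‖J‖) ≤ d * (σ - t₁)^2 := by
      have h1 : |g| * ‖J‖ ≤ |g| * (Kp * S ^ p * (σ - t₁)) :=
        mul_le_mul_of_nonneg_left hJb (abs_nonneg g)
      calc (σ - t₁) * (|g| * ‖J‖)
          ≤ (σ - t₁) * (|g| * (Kp * S ^ p * (σ - t₁))) :=
            mul_le_mul_of_nonneg_left h1 (by linarith)
        _ = d * (σ - t₁)^2 := by rw [hddef]; ring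
    calc ‖Complex.exp (-(Complex.I) * (ω₀:ℂ) * ((σ - t₁ : ℝ) : ℂ)) • ψhat₀
          - (Complex.I * (γ:ℂ)) •
            ((∫ τ in t₁..σ, Complex.exp (-(Complex.I) * (ω₀:ℂ) * ((σ - τ : ℝ) : ℂ)) • φhat τ)
              + (σ - t₁) • ((Complex.I * (g:ℂ)) • J))‖
        ≤ a + γ * (‖(∫ τ in t₁..σ,
              Complex.exp (-(Complex.I) * (ω₀:ℂ) * ((σ - τ : ℝ) : ℂ)) • φhat τ)‖
            + ‖(σ - t₁) • ((Complex.I * (g:ℂ)) • J)‖) := by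
          refine (norm_sub_le _ _).trans ?_
          rw [e1, norm_smul, hnormIγ]
          exact add_le_add_right (mul_le_mul_of_nonneg_left (norm_add_le _ _) hγ.le) a
      _ ≤ a + γ * ((b*(σ - t₁) + (γ*a)*(σ - t₁)^2/2 + (γ^2*b/2)*(σ - t₁)^3/3
              + (γ*(γ^2*M/2 + γ*d)/3)*(σ - t₁)^4/4) + d*(σ - t₁)^2) := by
          rw [e2]
          exact add_le_add_right (mul_le_mul_of_nonneg_left (add_le_add hI1 hJ2) hγ.le) a
      _ = a + (γ*b)*(σ - t₁) + (γ^2*a/2 + γ*d)*(σ - t₁)^2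
            + (γ^3*b/6)*(σ - t₁)^3 + (γ^4*M/24 + γ^3*d/12)*(σ - t₁)^4 := by ring
  -- assemble the sup bound
  have hM2 : M ≤ a + (γ*b)*(t - t₁) + (γ^2*a/2 + γ*d)*(t - t₁)^2
      + (γ^3*b/6)*(t - t₁)^3 + (γ^4*M/24 + γ^3*d/12)*(t - t₁)^4 := by
    apply csSup_le (hne.image _)
    rintro x ⟨σ, hσ, rfl⟩
    have h4 : σ - t₁ ≤ t - t₁ := by linarith [hσ.2]
    have h5 : (0:ℝ) ≤ σ - t₁ := by linarith [hσ.1]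
    have hp2 : (σ - t₁)^2 ≤ (t - t₁)^2 := pow_le_pow_left₀ h5 h4 2
    have hp3 : (σ - t₁)^3 ≤ (t - t₁)^3 := pow_le_pow_left₀ h5 h4 3
    have hp4 : (σ - t₁)^4 ≤ (t - t₁)^4 := pow_le_pow_left₀ h5 h4 4
    have hb1 := hψb2 σ hσ
    have c1 : (0:ℝ) ≤ γ*b := by positivity
    have c2 : (0:ℝ) ≤ γ^2*a/2 + γ*d := by positivity
    have c3 : (0:ℝ) ≤ γ^3*b/6 := by positivity
    have c4 : (0:ℝ) ≤ γ^4*M/24 + γ^3*d/12 := by positivity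
    linarith [hb1, mul_le_mul_of_nonneg_left h4 c1, mul_le_mul_of_nonneg_left hp2 c2,
      mul_le_mul_of_nonneg_left hp3 c3, mul_le_mul_of_nonneg_left hp4 c4]
  -- final polynomial arithmetic
  have hΔ0 : (0:ℝ) ≤ t - t₁ := by linarith
  have key : (1 - (γ*(t - t₁))^2/2) * M
      ≤ a + γ*(t - t₁)*b + (t - t₁)*d := by
    apply final_arith (γ*(t - t₁)) a (γ*(t - t₁)*b) ((t - t₁)*d) M ha0
      (by positivity) (mul_nonneg hΔ0 hd0) (by positivity)
      (by nlinarith [hc])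
    nlinarith [hM2]
  have h1c : (0:ℝ) < 1 - γ^2*(t - t₁)^2/2 := by linarith
  rw [inv_mul_eq_div, le_div_iff₀ h1c]
  have hfin : M * (1 - γ^2*(t - t₁)^2/2) ≤ a + γ*(t - t₁)*b + (t - t₁)*d := by
    nlinarith [key]
  calc M * (1 - γ^2*(t - t₁)^2/2) ≤ a + γ*(t - t₁)*b + (t - t₁)*d := hfin
    _ = a + γ * (t - t₁) * b + |g| * Kp * (t - t₁) * S ^ p := by rw [hddef]; ring
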